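/- If entire functions f₀, f₁ : ℂ → ℂ satisfy f₀(z) = −z^{-2} f₁(1/z) for all z ≠ 0, then f₀ = 0 and f₁ = 0. Consequently the space of global holomorphic 1-forms on the Riemann sphere is zero, i.e. the genus of the Riemann sphere is 0. -/

import Mathlib

/-- There is no nonzero global holomorphic 1-form on the Riemann sphere:
if `f₀(z) = -z⁻² f₁(1/z)` for entire `f₀, f₁` then both vanish; hence the genus of
the sphere is `0`. -/
theorem genus_sphere_zero (f₀ f₁ : ℂ → ℂ)
    (h₀ : Differentiable ℂ f₀) (h₁ : Differentiable ℂ f₁)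
    (h : ∀ z : ℂ, z ≠ 0 → f₀ z = -(z ^ (-2 : ℤ)) * f₁ (1 / z)) :
    f₀ = 0 ∧ f₁ = 0 := by
  set g : ℂ → ℂ := fun z => z ^ 2 * f₀ z with hg
  have hgd : Differentiable ℂ g := (differentiable_pow 2).mul h₀
  have hkey : ∀ z : ℂ, z ≠ 0 → g z = -f₁ (1 / z) := by
    intro z hz
    have hzz : (z : ℂ) ^ 2 * z ^ (-2 : ℤ) = 1 := by
      rw [← zpow_natCast z 2, ← zpow_add₀ hz]
      norm_num
    calc g z = z ^ 2 * (-(z ^ (-2 : ℤ)) * f₁ (1 / z)) := by rw [hg]; simp only [h z hz]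
      _ = -(z ^ 2 * z ^ (-2 : ℤ) * f₁ (1 / z)) := by ring
      _ = -f₁ (1 / z) := by rw [hzz, one_mul]
  have hb : Bornology.IsBounded (Set.range g) := by
    have hsub : Set.range g ⊆
        g '' Metric.closedBall 0 1 ∪ (fun w => -f₁ w) '' Metric.closedBall 0 1 := by
      rintro _ ⟨z, rfl⟩
      rcases le_or_gt ‖z‖ 1 with hz | hz
      · exact Or.inl ⟨z, by simpa [Complex.dist_eq] using hz, rfl⟩
      · have hz0 : z ≠ 0 := by
          intro h0; rw [h0] at hz; norm_num at hz
        refine Or.inr ⟨1 / z, ?_, ?_⟩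
        · simp only [Metric.mem_closedBall, Complex.dist_eq, sub_zero, one_div, norm_inv]
          rw [inv_le_one_iff₀]
          right; exact hz.le
        · exact (hkey z hz0).symm
    refine Bornology.IsBounded.subset (Bornology.IsBounded.union ?_ ?_) hsub
    · exact ((isCompact_closedBall (0:ℂ) 1).image hgd.continuous).isBounded
    · exact ((isCompact_closedBall (0:ℂ) 1).image (h₁.continuous.neg)).isBounded
  have hconst : ∀ z : ℂ, g z = 0 := by
    intro z
    have := hgd.apply_eq_apply_of_bounded hb z 0
    simpa [hg] using this
  have hf₀ : ∀ z : ℂ, z ≠ 0 → f₀ z = 0 := by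
    intro z hz
    have := hconst z
    have hz2 : (z : ℂ) ^ 2 ≠ 0 := pow_ne_zero 2 hz
    exact (mul_eq_zero.mp this).resolve_left hz2
  have hf₀' : f₀ = 0 := by
    apply Continuous.ext_on (dense_compl_singleton (0:ℂ)) h₀.continuous continuous_const
    intro z hz
    exact hf₀ z hz
  have hf₁ : ∀ w : ℂ, w ≠ 0 → f₁ w = 0 := by
    intro w hw
    have hz : (1 / w : ℂ) ≠ 0 := one_div_ne_zero hw
    have := h (1 / w) hz
    rw [hf₀ _ hz] at this
    have hne : -((1 / w : ℂ) ^ (-2 : ℤ)) ≠ 0 := by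
      simp [zpow_ne_zero, hw]
    have h1 : (1 : ℂ) / (1 / w) = w := one_div_one_div w
    rw [h1] at this
    exact ((mul_eq_zero.mp this.symm).resolve_left hne)
  have hf₁' : f₁ = 0 := by
    apply Continuous.ext_on (dense_compl_singleton (0:ℂ)) h₁.continuous continuous_const
    intro w hw
    exact hf₁ w hw
  exact ⟨hf₀', hf₁'⟩
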